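/- In the DEI network creation game with α ≥ 1, the star S_n and the double star DS_n are pairwise stable; with α ≥ 4/3, the double star with switched centers (blue center adjacent to all red non-center agents and vice versa) is pairwise stable. -/

import Mathlib

open SimpleGraph ENNReal

/-- Number of neighbors (degree) of `u` in `G`. -/
noncomputable def deg {V : Type*} (G : SimpleGraph V) (u : V) : ℕ :=
  Nat.card {v // G.Adj u v}

/-- Number of same-type ("friend") neighbors of `u`. -/
noncomputable def fr {V ι : Type*} (G : SimpleGraph V) (t : V → ι) (u : V) : ℕ :=
  Nat.card {v // G.Adj u v ∧ t v = t u}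

/-- Number of different-type neighbors of `u`. -/
noncomputable def en {V ι : Type*} (G : SimpleGraph V) (t : V → ι) (u : V) : ℕ :=
  Nat.card {v // G.Adj u v ∧ t v ≠ t u}

/-- Distance cost: sum of (extended) graph distances from `u` to all agents;
it is infinite iff some agent is unreachable from `u`. -/
noncomputable def distCost {V : Type*} [Fintype V] (G : SimpleGraph V) (u : V) : ℝ≥0∞ :=
  ∑ v, (G.edist u v : ℝ≥0∞)

/-- The graph obtained from `G` by adding the edge `uv`. -/
def addE {V : Type*} (G : SimpleGraph V) (u v : V) : SimpleGraph V :=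
  G ⊔ fromEdgeSet {s(u, v)}

/-- The graph obtained from `G` by deleting the edge `uv`. -/
def delE {V : Type*} (G : SimpleGraph V) (u v : V) : SimpleGraph V :=
  G.deleteEdges {s(u, v)}

/-- Pairwise stability (Jackson–Wolinsky) for a given cost function:
no agent benefits from unilaterally severing an incident edge, and for every
non-edge at least one endpoint does not strictly benefit from creating it. -/
def PairwiseStable {V : Type*} (cost : SimpleGraph V → V → ℝ≥0∞) (G : SimpleGraph V) : Prop :=
  (∀ u v, G.Adj u v → cost G u ≤ cost (delE G u v) u) ∧
  (∀ u v, u ≠ v → ¬ G.Adj u v →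
    cost G u ≤ cost (addE G u v) u ∨ cost G v ≤ cost (addE G u v) v)

/-- DEI neighborhood cost: `α · (deg(u) + Σ_{k=1}^{en(u)} 1/k)`. -/
noncomputable def deiN {V ι : Type*} (α : ℝ) (G : SimpleGraph V) (t : V → ι) (u : V) : ℝ :=
  α * ((deg G u : ℝ) + ∑ k ∈ Finset.range (en G t u), (1 : ℝ) / (k + 1))

/-- Total DEI cost: neighborhood cost plus distance cost. -/
noncomputable def deiCost {V ι : Type*} [Fintype V] (α : ℝ) (G : SimpleGraph V)
    (t : V → ι) (u : V) : ℝ≥0∞ :=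
  ENNReal.ofReal (deiN α G t u) + distCost G u

/-- The star with center `c`: `c` is adjacent to every other vertex. -/
def starG {V : Type*} (c : V) : SimpleGraph V :=
  fromRel (fun u _ => u = c)

/-- The double star: the blue center `cB` is adjacent to all blue agents,
the red center `cR` is adjacent to all red agents, and `cB` and `cR` are adjacent.
(Blue = `false`, red = `true`.) -/
def doubleStar {V : Type*} (t : V → Bool) (cB cR : V) : SimpleGraph V :=
  fromRel (fun u v => (u = cB ∧ t v = false) ∨ (u = cR ∧ t v = true) ∨ (u = cB ∧ v = cR))

/-- The double star with switched centers: the blue center `cB` is adjacent to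
all red agents and to `cR`, and the red center `cR` is adjacent to all blue agents.
(Blue = `false`, red = `true`.) -/
def switchedDoubleStar {V : Type*} (t : V → Bool) (cB cR : V) : SimpleGraph V :=
  fromRel (fun u v => (u = cB ∧ t v = true) ∨ (u = cR ∧ t v = false))

namespace DEIAux

variable {V : Type*}

/-! ### Generic edist lemmas -/

lemma one_le_edist {H : SimpleGraph V} {u v : V} (h : u ≠ v) : 1 ≤ H.edist u v :=
  Order.one_le_iff_pos.mpr (edist_pos_of_ne h)

lemma edist_le_one {H : SimpleGraph V} {u v : V} (h : H.Adj u v) : H.edist u v ≤ 1 :=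
  edist_eq_one_iff_adj.mpr h |>.le

lemma edist_le_two {H : SimpleGraph V} {u x v : V} (h1 : H.Adj u x) (h2 : H.Adj x v) :
    H.edist u v ≤ 2 := by
  calc H.edist u v ≤ H.edist u x + H.edist x v := SimpleGraph.edist_triangle
  _ ≤ 1 + 1 := add_le_add (edist_le_one h1) (edist_le_one h2)
  _ = 2 := by norm_num

lemma edist_le_three {H : SimpleGraph V} {u x y v : V} (h1 : H.Adj u x) (h2 : H.Adj x y)
    (h3 : H.Adj y v) : H.edist u v ≤ 3 := by
  calc H.edist u v ≤ H.edist u x + H.edist x v := SimpleGraph.edist_triangle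
  _ ≤ 1 + 2 := add_le_add (edist_le_one h1) (edist_le_two h2 h3)
  _ = 3 := by norm_num

lemma two_le_edist {H : SimpleGraph V} {u v : V} (hne : u ≠ v) (hadj : ¬ H.Adj u v) :
    2 ≤ H.edist u v := by
  by_contra hlt
  push_neg at hlt
  obtain ⟨p, hp⟩ := exists_walk_of_edist_ne_top (by intro h; rw [h] at hlt; exact (not_top_lt hlt))
  have hp2 : p.length < 2 := by
    have := hp ▸ hlt
    exact_mod_cast this
  cases p with
  | nil => exact hne rfl
  | cons ha q =>
    cases q with
    | nil => exact hadj ha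
    | cons hb q' => simp [SimpleGraph.Walk.length_cons] at hp2

lemma three_le_edist {H : SimpleGraph V} {u v : V} (hne : u ≠ v) (hadj : ¬ H.Adj u v)
    (hcom : ∀ x, H.Adj u x → ¬ H.Adj x v) : 3 ≤ H.edist u v := by
  by_contra hlt
  push_neg at hlt
  obtain ⟨p, hp⟩ := exists_walk_of_edist_ne_top (by intro h; rw [h] at hlt; exact (not_top_lt hlt))
  have hp3 : p.length < 3 := by
    have := hp ▸ hlt
    exact_mod_cast this
  cases p with
  | nil => exact hne rfl
  | cons ha q =>
    cases q with
    | nil => exact hadj ha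
    | cons hb q' =>
      cases q' with
      | nil => exact hcom _ ha hb
      | cons hc q'' => simp [SimpleGraph.Walk.length_cons] at hp3; omega

lemma walk_mem {H : SimpleGraph V} {S : Set V}
    (hS : ∀ a b, H.Adj a b → a ∈ S → b ∈ S) : ∀ {u v : V}, H.Walk u v → u ∈ S → v ∈ S := by
  intro u v p
  induction p with
  | nil => exact id
  | cons h q ih => exact fun hu => ih (hS _ _ h hu)

lemma not_reachable_sep {H : SimpleGraph V} {u v : V} (S : Set V)
    (hS : ∀ a b, H.Adj a b → a ∈ S → b ∈ S) (hu : u ∈ S) (hv : v ∉ S) :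
    ¬ H.Reachable u v := fun ⟨p⟩ => hv (walk_mem hS p hu)

lemma not_reachable_isolated {H : SimpleGraph V} {u v : V} (hne : u ≠ v)
    (h : ∀ x, ¬ H.Adj v x) : ¬ H.Reachable u v := by
  intro hr
  obtain ⟨p⟩ := hr.symm
  cases p with
  | nil => exact hne rfl
  | cons ha _ => exact h _ ha

lemma not_reachable_isolated' {H : SimpleGraph V} {u v : V} (hne : u ≠ v)
    (h : ∀ x, ¬ H.Adj u x) : ¬ H.Reachable u v := by
  intro hr
  obtain ⟨p⟩ := hr
  cases p with
  | nil => exact hne rfl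
  | cons ha _ => exact h _ ha

/-! ### addE / delE -/

lemma addE_adj {G : SimpleGraph V} {u v a b : V} (huv : u ≠ v) :
    (addE G u v).Adj a b ↔ G.Adj a b ∨ (a = u ∧ b = v) ∨ (a = v ∧ b = u) := by
  simp only [addE, sup_adj, fromEdgeSet_adj, Set.mem_singleton_iff, Sym2.eq_iff]
  constructor
  · rintro (h | ⟨(⟨rfl, rfl⟩ | ⟨rfl, rfl⟩), hne⟩) <;> tauto
  · rintro (h | ⟨rfl, rfl⟩ | ⟨rfl, rfl⟩)
    · exact Or.inl h
    · exact Or.inr ⟨Or.inl ⟨rfl, rfl⟩, huv⟩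
    · exact Or.inr ⟨Or.inr ⟨rfl, rfl⟩, huv.symm⟩

lemma addE_comm (G : SimpleGraph V) (u v : V) : addE G u v = addE G v u := by
  unfold addE
  rw [Sym2.eq_swap]

lemma le_addE (G : SimpleGraph V) (u v : V) : G ≤ addE G u v := le_sup_left

lemma delE_adj {G : SimpleGraph V} {u v a b : V} :
    (delE G u v).Adj a b ↔ G.Adj a b ∧ ¬((a = u ∧ b = v) ∨ (a = v ∧ b = u)) := by
  simp [delE, deleteEdges_adj, Sym2.eq_iff]

lemma delE_comm (G : SimpleGraph V) (u v : V) : delE G u v = delE G v u := by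
  unfold delE
  rw [Sym2.eq_swap]

/-! ### counting lemmas -/

lemma deg_addE [Fintype V] {G : SimpleGraph V} {u v : V} (hne : u ≠ v) (hadj : ¬G.Adj u v) :
    deg (addE G u v) u = deg G u + 1 := by
  have hset : {w | (addE G u v).Adj u w} = insert v {w | G.Adj u w} := by
    ext w
    simp only [Set.mem_setOf_eq, Set.mem_insert_iff, addE_adj hne]
    constructor
    · rintro (h | ⟨-, rfl⟩ | ⟨rfl, -⟩)
      · exact Or.inr h
      · exact Or.inl rfl
      · exact absurd rfl hne
    · rintro (rfl | h)
      · tauto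
      · exact Or.inl h
  have h1 : deg (addE G u v) u = Set.ncard {w | (addE G u v).Adj u w} := Nat.card_coe_set_eq _
  have h2 : deg G u = Set.ncard {w | G.Adj u w} := Nat.card_coe_set_eq _
  rw [h1, h2, hset]
  exact Set.ncard_insert_of_notMem hadj (Set.toFinite _)

lemma en_mono [Fintype V] {ι : Type*} {t : V → ι} {G G' : SimpleGraph V} (h : G ≤ G') (u : V) :
    en G t u ≤ en G' t u := by
  have h1 : en G t u = Set.ncard {w | G.Adj u w ∧ t w ≠ t u} := Nat.card_coe_set_eq _
  have h2 : en G' t u = Set.ncard {w | G'.Adj u w ∧ t w ≠ t u} := Nat.card_coe_set_eq _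
  rw [h1, h2]
  exact Set.ncard_le_ncard (fun w hw => ⟨h hw.1, hw.2⟩) (Set.toFinite _)

lemma en_addE_cross [Fintype V] {ι : Type*} {t : V → ι} {G : SimpleGraph V} {u v : V}
    (hne : u ≠ v) (hadj : ¬G.Adj u v) (ht : t v ≠ t u) :
    en (addE G u v) t u = en G t u + 1 := by
  have hset : {w | (addE G u v).Adj u w ∧ t w ≠ t u} = insert v {w | G.Adj u w ∧ t w ≠ t u} := by
    ext w
    simp only [Set.mem_setOf_eq, Set.mem_insert_iff, addE_adj hne]
    constructor
    · rintro ⟨(h | ⟨-, rfl⟩ | ⟨rfl, -⟩), htw⟩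
      · exact Or.inr ⟨h, htw⟩
      · exact Or.inl rfl
      · exact absurd rfl hne
    · rintro (rfl | ⟨h, htw⟩)
      · exact ⟨by tauto, ht⟩
      · exact ⟨Or.inl h, htw⟩
  have h1 : en (addE G u v) t u = Set.ncard {w | (addE G u v).Adj u w ∧ t w ≠ t u} :=
    Nat.card_coe_set_eq _
  have h2 : en G t u = Set.ncard {w | G.Adj u w ∧ t w ≠ t u} := Nat.card_coe_set_eq _
  rw [h1, h2, hset]
  exact Set.ncard_insert_of_notMem (fun h => hadj h.1) (Set.toFinite _)

lemma en_eq_zero_of {ι : Type*} {t : V → ι} {G : SimpleGraph V} {u : V}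
    (h : ∀ w, G.Adj u w → t w = t u) : en G t u = 0 := by
  have hset : {w | G.Adj u w ∧ t w ≠ t u} = ∅ := by
    ext w
    simp only [Set.mem_setOf_eq, Set.mem_empty_iff_false, iff_false, not_and]
    exact fun hw htw => htw (h w hw)
  have h1 : en G t u = Set.ncard {w | G.Adj u w ∧ t w ≠ t u} := Nat.card_coe_set_eq _
  rw [h1, hset, Set.ncard_empty]

lemma en_eq_one_of {ι : Type*} {t : V → ι} {G : SimpleGraph V} {u m : V} (hm : t m ≠ t u)
    (h : ∀ w, G.Adj u w ↔ w = m) : en G t u = 1 := by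
  have hset : {w | G.Adj u w ∧ t w ≠ t u} = {m} := by
    ext w
    simp only [Set.mem_setOf_eq, Set.mem_singleton_iff, h w]
    constructor
    · exact fun hw => hw.1
    · rintro rfl; exact ⟨rfl, hm⟩
  have h1 : en G t u = Set.ncard {w | G.Adj u w ∧ t w ≠ t u} := Nat.card_coe_set_eq _
  rw [h1, hset, Set.ncard_singleton]

/-! ### harmonic sums and cost arithmetic -/

noncomputable def Hs (n : ℕ) : ℝ := ∑ k ∈ Finset.range n, (1 : ℝ) / (k + 1)

lemma Hs_nonneg (n : ℕ) : 0 ≤ Hs n :=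
  Finset.sum_nonneg fun k _ => by positivity

lemma Hs_mono {m n : ℕ} (h : m ≤ n) : Hs m ≤ Hs n :=
  Finset.sum_le_sum_of_subset_of_nonneg (Finset.range_subset_range.mpr h) (fun k _ _ => by positivity)

lemma Hs_succ (n : ℕ) : Hs (n + 1) = Hs n + 1 / (n + 1) := Finset.sum_range_succ _ n

lemma deiN_nonneg {ι : Type*} {α : ℝ} (hα : 0 ≤ α) (G : SimpleGraph V) (t : V → ι) (u : V) :
    0 ≤ deiN α G t u := by
  apply mul_nonneg hα
  have := Hs_nonneg (en G t u)
  unfold Hs at this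
  positivity

lemma deiN_eq {ι : Type*} (α : ℝ) (G : SimpleGraph V) (t : V → ι) (u : V) :
    deiN α G t u = α * ((deg G u : ℝ) + Hs (en G t u)) := rfl

lemma deiN_step {ι : Type*} {α : ℝ} (hα : 0 ≤ α) {G G' : SimpleGraph V} {t : V → ι} {u : V}
    {g : ℝ} (hd : deg G u + 1 ≤ deg G' u)
    (hg : g ≤ α * (1 + Hs (en G' t u) - Hs (en G t u))) :
    deiN α G t u + g ≤ deiN α G' t u := by
  rw [deiN_eq, deiN_eq]
  have hdr : (deg G u : ℝ) + 1 ≤ (deg G' u : ℝ) := by exact_mod_cast hd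
  nlinarith [mul_nonneg hα (sub_nonneg.mpr hdr)]

lemma le_cost_of_not_reachable [Fintype V] {ι : Type*} (α : ℝ) (t : V → ι)
    {H : SimpleGraph V} {u v : V} (h : ¬ H.Reachable u v) (C : ℝ≥0∞) :
    C ≤ deiCost α H t u := by
  have h1 : (H.edist u v : ℝ≥0∞) = ⊤ := by
    rw [edist_eq_top_of_not_reachable h]; rfl
  have h2 : distCost H u = ⊤ := by
    apply eq_top_iff.mpr
    rw [← h1]
    exact Finset.single_le_sum (f := fun w => (H.edist u w : ℝ≥0∞))
      (fun w _ => zero_le) (Finset.mem_univ v)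
  rw [deiCost, h2, add_top]
  exact le_top

lemma add_not_improving [Fintype V] {ι : Type*} {α : ℝ} (hα : 0 ≤ α) {t : V → ι}
    {G : SimpleGraph V} {u v : V} (g : ℕ)
    (hn : deiN α G t u + g ≤ deiN α (addE G u v) t u)
    (hd : ∀ w, w ≠ v → G.edist u w ≤ (addE G u v).edist u w)
    (hv : G.edist u v ≤ (addE G u v).edist u v + g) :
    deiCost α G t u ≤ deiCost α (addE G u v) t u := by
  classical
  set G' := addE G u v
  have hsum : distCost G u ≤ distCost G' u + g := by
    have step : ∀ w : V, (G.edist u w : ℝ≥0∞) ≤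
        (G'.edist u w : ℝ≥0∞) + (if w = v then (g : ℝ≥0∞) else 0) := by
      intro w
      by_cases h : w = v
      · subst h
        simp only [if_pos rfl]
        calc (G.edist u w : ℝ≥0∞) ≤ ((G'.edist u w + g : ℕ∞) : ℝ≥0∞) := by
              exact_mod_cast ENat.toENNReal_le.mpr hv
        _ = (G'.edist u w : ℝ≥0∞) + (g : ℝ≥0∞) := by
              rw [ENat.toENNReal_add]; norm_cast
      · simp only [if_neg h, add_zero]
        exact ENat.toENNReal_le.mpr (hd w h)
    calc distCost G u ≤ ∑ w, ((G'.edist u w : ℝ≥0∞) + (if w = v then (g : ℝ≥0∞) else 0)) :=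
          Finset.sum_le_sum fun w _ => step w
    _ = distCost G' u + ∑ w, (if w = v then (g : ℝ≥0∞) else 0) := by
          rw [Finset.sum_add_distrib]; rfl
    _ = distCost G' u + g := by rw [Finset.sum_ite_eq' Finset.univ v (fun _ => (g : ℝ≥0∞))]
                                simp
  calc deiCost α G t u = ENNReal.ofReal (deiN α G t u) + distCost G u := rfl
  _ ≤ ENNReal.ofReal (deiN α G t u) + (distCost G' u + g) := by gcongr
  _ = (ENNReal.ofReal (deiN α G t u) + g) + distCost G' u := by ring
  _ ≤ ENNReal.ofReal (deiN α G' t u) + distCost G' u := by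
      gcongr
      have : (g : ℝ≥0∞) = ENNReal.ofReal (g : ℝ) := by
        rw [ENNReal.ofReal_natCast]
      rw [this, ← ENNReal.ofReal_add (deiN_nonneg hα G t u) (by positivity)]
      exact ENNReal.ofReal_le_ofReal hn
  _ = deiCost α G' t u := rfl

/-! ### distance comparison helpers -/

lemma ne_of_tt {t : V → Bool} {a b : V} (ha : t a = false) (hb : t b = true) : a ≠ b :=
  fun h => by rw [h, hb] at ha; exact Bool.noConfusion ha

lemma hd_adj {G H : SimpleGraph V} {u w : V} (h : G.Adj u w) : G.edist u w ≤ H.edist u w :=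
  (edist_le_one h).trans (one_le_edist h.ne)

lemma hd2 {G H : SimpleGraph V} {u x w : V} (h1 : G.Adj u x) (h2 : G.Adj x w)
    (hne : u ≠ w) (hnadj : ¬H.Adj u w) : G.edist u w ≤ H.edist u w :=
  (edist_le_two h1 h2).trans (two_le_edist hne hnadj)

lemma hd3 {G H : SimpleGraph V} {u x y w : V} (h1 : G.Adj u x) (h2 : G.Adj x y) (h3 : G.Adj y w)
    (hne : u ≠ w) (hnadj : ¬H.Adj u w) (hcom : ∀ z, H.Adj u z → ¬ H.Adj z w) :
    G.edist u w ≤ H.edist u w :=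
  (edist_le_three h1 h2 h3).trans (three_le_edist hne hnadj hcom)

lemma gain1 {G H : SimpleGraph V} {u v : V} (hne : u ≠ v) (h : G.edist u v ≤ 2) :
    G.edist u v ≤ H.edist u v + ((1:ℕ):ℕ∞) := by
  refine h.trans ?_
  calc (2:ℕ∞) = 1 + ((1:ℕ):ℕ∞) := by norm_num
  _ ≤ H.edist u v + _ := add_le_add_left (one_le_edist hne) _

lemma gain2 {G H : SimpleGraph V} {u v : V} (hne : u ≠ v) (h : G.edist u v ≤ 3) :
    G.edist u v ≤ H.edist u v + ((2:ℕ):ℕ∞) := by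
  refine h.trans ?_
  calc (3:ℕ∞) = 1 + ((2:ℕ):ℕ∞) := by norm_num
  _ ≤ H.edist u v + _ := add_le_add_left (one_le_edist hne) _


/-! ### graph-specific deletion lemmas -/

set_option linter.unusedSectionVars false

section star
variable {c : V}

lemma star_adj {a b : V} : (starG c).Adj a b ↔ a ≠ b ∧ (a = c ∨ b = c) := by
  simp [starG, fromRel_adj]

lemma star_not_reach {u v : V} (h : (starG c).Adj u v) :
    ¬ (delE (starG c) u v).Reachable u v := by
  rw [star_adj] at h
  obtain ⟨hne, hc⟩ := h
  rcases hc with rfl | rfl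
  · -- u = c : isolate v
    apply not_reachable_isolated hne
    intro x hx
    rw [delE_adj, star_adj] at hx
    tauto
  · -- v = c : isolate u
    apply not_reachable_isolated' hne
    intro x hx
    rw [delE_adj, star_adj] at hx
    tauto

end star

section ds
variable {t : V → Bool} {cB cR : V} (hcB : t cB = false) (hcR : t cR = true)

lemma ds_adj {a b : V} : (doubleStar t cB cR).Adj a b ↔ a ≠ b ∧
    (((a = cB ∧ t b = false) ∨ (a = cR ∧ t b = true) ∨ (a = cB ∧ b = cR)) ∨
     ((b = cB ∧ t a = false) ∨ (b = cR ∧ t a = true) ∨ (b = cB ∧ a = cR))) := by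
  simp [doubleStar, fromRel_adj]

include hcB hcR in
lemma ds_nbr_blue_leaf {x w : V} (hx : t x = false) (hxB : x ≠ cB)
    (h : (doubleStar t cB cR).Adj x w) : w = cB := by
  have hxR : x ≠ cR := fun h' => by rw [h', hcR] at hx; exact Bool.noConfusion hx
  rw [ds_adj] at h
  rcases h with ⟨hne, h⟩
  simp [hx, hxB, hxR] at h
  tauto

include hcB hcR in
lemma ds_nbr_red_leaf {x w : V} (hx : t x = true) (hxR : x ≠ cR)
    (h : (doubleStar t cB cR).Adj x w) : w = cR := by
  have hxB : x ≠ cB := fun h' => by rw [h', hcB] at hx; exact Bool.noConfusion hx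
  rw [ds_adj] at h
  rcases h with ⟨hne, h⟩
  simp [hx, hxB, hxR] at h
  tauto

include hcB hcR in
lemma ds_not_reach {u v : V} (h : (doubleStar t cB cR).Adj u v) :
    ¬ (delE (doubleStar t cB cR) u v).Reachable u v := by
  have hne : u ≠ v := h.ne
  have hBR : cB ≠ cR := fun h' => by rw [h', hcR] at hcB; exact Bool.noConfusion hcB
  -- case split on which kind of edge {u,v} is
  by_cases hu1 : t u = false ∧ u ≠ cB
  · -- u is a blue leaf: its unique neighbor is cB = v; u isolated after deletion
    apply not_reachable_isolated' hne
    intro x hx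
    rw [delE_adj] at hx
    obtain ⟨hadj, hforb⟩ := hx
    have hxcB := ds_nbr_blue_leaf hcB hcR hu1.1 hu1.2 hadj
    have hvcB := ds_nbr_blue_leaf hcB hcR hu1.1 hu1.2 h
    exact hforb (Or.inl ⟨rfl, hxcB.trans hvcB.symm⟩)
  by_cases hu2 : t u = true ∧ u ≠ cR
  · apply not_reachable_isolated' hne
    intro x hx
    rw [delE_adj] at hx
    obtain ⟨hadj, hforb⟩ := hx
    have hxcR := ds_nbr_red_leaf hcB hcR hu2.1 hu2.2 hadj
    have hvcR := ds_nbr_red_leaf hcB hcR hu2.1 hu2.2 h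
    exact hforb (Or.inl ⟨rfl, hxcR.trans hvcR.symm⟩)
  by_cases hv1 : t v = false ∧ v ≠ cB
  · apply not_reachable_isolated hne
    intro x hx
    rw [delE_adj] at hx
    obtain ⟨hadj, hforb⟩ := hx
    have hxcB := ds_nbr_blue_leaf hcB hcR hv1.1 hv1.2 hadj
    have hucB := ds_nbr_blue_leaf hcB hcR hv1.1 hv1.2 h.symm
    exact hforb (Or.inr ⟨rfl, hxcB.trans hucB.symm⟩)
  by_cases hv2 : t v = true ∧ v ≠ cR
  · apply not_reachable_isolated hne
    intro x hx
    rw [delE_adj] at hx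
    obtain ⟨hadj, hforb⟩ := hx
    have hxcR := ds_nbr_red_leaf hcB hcR hv2.1 hv2.2 hadj
    have hucR := ds_nbr_red_leaf hcB hcR hv2.1 hv2.2 h.symm
    exact hforb (Or.inr ⟨rfl, hxcR.trans hucR.symm⟩)
  · -- now u,v are both centers
    have hu : u = cB ∨ u = cR := by
      rcases Bool.eq_false_or_eq_true (t u) with h' | h'
      · right; by_contra h''; exact hu2 ⟨h', h''⟩
      · left; by_contra h''; exact hu1 ⟨h', h''⟩
    have hv : v = cB ∨ v = cR := by
      rcases Bool.eq_false_or_eq_true (t v) with h' | h'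
      · right; by_contra h''; exact hv2 ⟨h', h''⟩
      · left; by_contra h''; exact hv1 ⟨h', h''⟩
    -- monochromatic separation: after deleting cB-cR, every edge is monochromatic
    have key : ∀ a b, (delE (doubleStar t cB cR) u v).Adj a b → t a = t b := by
      intro a b hab
      rw [delE_adj] at hab
      obtain ⟨hadj, hforb⟩ := hab
      rw [ds_adj] at hadj
      obtain ⟨hab_ne, hcl⟩ := hadj
      rcases hu with rfl | rfl <;> rcases hv with rfl | rfl <;>
        first
        | exact absurd rfl hne
        | (rcases hcl with (⟨rfl, h'⟩ | ⟨rfl, h'⟩ | ⟨rfl, rfl⟩) | (⟨rfl, h'⟩ | ⟨rfl, h'⟩ | ⟨rfl, rfl⟩) <;>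
            simp_all)
    apply not_reachable_sep {x | t x = t u}
    · intro a b hab ha
      simp only [Set.mem_setOf_eq] at ha ⊢
      rw [← key a b hab]; exact ha
    · rfl
    · intro h'
      simp only [Set.mem_setOf_eq] at h'
      rcases hu with rfl | rfl <;> rcases hv with rfl | rfl <;> simp_all
end ds

section sds
variable {t : V → Bool} {cB cR : V} (hcB : t cB = false) (hcR : t cR = true)

lemma sds_adj {a b : V} : (switchedDoubleStar t cB cR).Adj a b ↔ a ≠ b ∧
    (((a = cB ∧ t b = true) ∨ (a = cR ∧ t b = false)) ∨
     ((b = cB ∧ t a = true) ∨ (b = cR ∧ t a = false))) := by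
  simp [switchedDoubleStar, fromRel_adj]

include hcB hcR in
lemma sds_nbr_red_leaf {x w : V} (hx : t x = true) (hxR : x ≠ cR)
    (h : (switchedDoubleStar t cB cR).Adj x w) : w = cB := by
  have hxB : x ≠ cB := fun h' => by rw [h', hcB] at hx; exact Bool.noConfusion hx
  rw [sds_adj] at h
  rcases h with ⟨hne, h⟩
  simp [hx, hxB, hxR] at h
  tauto

include hcB hcR in
lemma sds_nbr_blue_leaf {x w : V} (hx : t x = false) (hxB : x ≠ cB)
    (h : (switchedDoubleStar t cB cR).Adj x w) : w = cR := by
  have hxR : x ≠ cR := fun h' => by rw [h', hcR] at hx; exact Bool.noConfusion hx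
  rw [sds_adj] at h
  rcases h with ⟨hne, h⟩
  simp [hx, hxB, hxR] at h
  tauto

include hcB hcR in
lemma sds_centers_not_reach :
    ¬ (delE (switchedDoubleStar t cB cR) cB cR).Reachable cB cR := by
  have hBR : cB ≠ cR := fun h' => by rw [h', hcR] at hcB; exact Bool.noConfusion hcB
  apply not_reachable_sep {x | x = cB ∨ (t x = true ∧ x ≠ cR)}
  · intro a b hab ha
    rw [delE_adj] at hab
    obtain ⟨hadj, hforb⟩ := hab
    rw [sds_adj] at hadj
    obtain ⟨hab_ne, hcl⟩ := hadj
    simp only [Set.mem_setOf_eq] at ha ⊢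
    rcases hcl with (⟨rfl, h'⟩ | ⟨rfl, h'⟩) | (⟨rfl, h'⟩ | ⟨rfl, h'⟩)
    · right
      refine ⟨h', fun h'' => ?_⟩
      exact hforb (Or.inl ⟨rfl, h''⟩)
    · rcases ha with h'' | ⟨ht, h''⟩
      · exact absurd h''.symm hBR
      · exact absurd rfl h''
    · left; rfl
    · rcases ha with rfl | ⟨ht, -⟩
      · exact (hforb (Or.inl ⟨rfl, rfl⟩)).elim
      · rw [h'] at ht; exact Bool.noConfusion ht
  · exact Or.inl rfl
  · intro h'
    simp only [Set.mem_setOf_eq] at h'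
    rcases h' with h' | ⟨_, h''⟩
    · exact hBR h'.symm
    · exact h'' rfl

include hcB hcR in
lemma sds_not_reach {u v : V} (h : (switchedDoubleStar t cB cR).Adj u v) :
    ¬ (delE (switchedDoubleStar t cB cR) u v).Reachable u v := by
  have hne : u ≠ v := h.ne
  by_cases hu1 : t u = true ∧ u ≠ cR
  · apply not_reachable_isolated' hne
    intro x hx
    rw [delE_adj] at hx
    obtain ⟨hadj, hforb⟩ := hx
    have hxcB := sds_nbr_red_leaf hcB hcR hu1.1 hu1.2 hadj
    have hvcB := sds_nbr_red_leaf hcB hcR hu1.1 hu1.2 h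
    exact hforb (Or.inl ⟨rfl, hxcB.trans hvcB.symm⟩)
  by_cases hu2 : t u = false ∧ u ≠ cB
  · apply not_reachable_isolated' hne
    intro x hx
    rw [delE_adj] at hx
    obtain ⟨hadj, hforb⟩ := hx
    have hxcR := sds_nbr_blue_leaf hcB hcR hu2.1 hu2.2 hadj
    have hvcR := sds_nbr_blue_leaf hcB hcR hu2.1 hu2.2 h
    exact hforb (Or.inl ⟨rfl, hxcR.trans hvcR.symm⟩)
  by_cases hv1 : t v = true ∧ v ≠ cR
  · apply not_reachable_isolated hne
    intro x hx
    rw [delE_adj] at hx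
    obtain ⟨hadj, hforb⟩ := hx
    have hxcB := sds_nbr_red_leaf hcB hcR hv1.1 hv1.2 hadj
    have hucB := sds_nbr_red_leaf hcB hcR hv1.1 hv1.2 h.symm
    exact hforb (Or.inr ⟨rfl, hxcB.trans hucB.symm⟩)
  by_cases hv2 : t v = false ∧ v ≠ cB
  · apply not_reachable_isolated hne
    intro x hx
    rw [delE_adj] at hx
    obtain ⟨hadj, hforb⟩ := hx
    have hxcR := sds_nbr_blue_leaf hcB hcR hv2.1 hv2.2 hadj
    have hucR := sds_nbr_blue_leaf hcB hcR hv2.1 hv2.2 h.symm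
    exact hforb (Or.inr ⟨rfl, hxcR.trans hucR.symm⟩)
  · have hu : u = cB ∨ u = cR := by
      rcases Bool.eq_false_or_eq_true (t u) with h' | h'
      · right; by_contra h''; exact hu1 ⟨h', h''⟩
      · left; by_contra h''; exact hu2 ⟨h', h''⟩
    have hv : v = cB ∨ v = cR := by
      rcases Bool.eq_false_or_eq_true (t v) with h' | h'
      · right; by_contra h''; exact hv1 ⟨h', h''⟩
      · left; by_contra h''; exact hv2 ⟨h', h''⟩
    rcases hu with rfl | rfl <;> rcases hv with rfl | rfl
    · exact absurd rfl hne
    · exact sds_centers_not_reach hcB hcR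
    · rw [delE_comm]
      intro hr
      exact sds_centers_not_reach hcB hcR hr.symm
    · exact absurd rfl hne

end sds


/-! ### addition master lemmas -/

section masters
variable [Fintype V] {α : ℝ} {t : V → Bool}

lemma star_add (hα1 : 1 ≤ α) (c u v : V) (hu : u ≠ c) (hv : v ≠ c) (huv : u ≠ v) :
    deiCost α (starG c) t u ≤ deiCost α (addE (starG c) u v) t u := by
  have hα0 : (0:ℝ) ≤ α := by linarith
  have hadj : ¬(starG c).Adj u v := by rw [star_adj]; tauto
  have hauc : (starG c).Adj u c := star_adj.mpr ⟨hu, Or.inr rfl⟩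
  apply add_not_improving hα0 1
  · apply deiN_step hα0 (deg_addE huv hadj).ge
    have hH : Hs (en (starG c) t u) ≤ Hs (en (addE (starG c) u v) t u) :=
      Hs_mono (en_mono (le_addE _ _ _) u)
    push_cast
    nlinarith
  · intro w hwv
    by_cases hwu : w = u
    · subst hwu; rw [SimpleGraph.edist_self]; exact zero_le
    by_cases hwc : w = c
    · subst hwc; exact hd_adj hauc
    · refine hd2 hauc (star_adj.mpr ⟨Ne.symm hwc, Or.inl rfl⟩) (Ne.symm hwu) ?_
      rw [addE_adj huv]
      rintro (h | ⟨-, h2⟩ | ⟨h1, -⟩)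
      · rw [star_adj] at h; tauto
      · exact hwv h2
      · exact huv h1
  · exact gain1 huv (edist_le_two hauc (star_adj.mpr ⟨fun h => hv h.symm, Or.inl rfl⟩))

variable {cB cR : V}

lemma ds_adj_cB {b : V} (h1 : b ≠ cB) (h2 : t b = false) : (doubleStar t cB cR).Adj cB b :=
  ds_adj.mpr ⟨Ne.symm h1, Or.inl (Or.inl ⟨rfl, h2⟩)⟩

lemma ds_adj_cR {b : V} (h1 : b ≠ cR) (h2 : t b = true) : (doubleStar t cB cR).Adj cR b :=
  ds_adj.mpr ⟨Ne.symm h1, Or.inl (Or.inr (Or.inl ⟨rfl, h2⟩))⟩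

lemma ds_adj_BR (h : cB ≠ cR) : (doubleStar t cB cR).Adj cB cR :=
  ds_adj.mpr ⟨h, Or.inl (Or.inr (Or.inr ⟨rfl, rfl⟩))⟩

/-- `cB` does not improve by linking to a red non-center `v`. -/
lemma ds_add_cB (hα1 : 1 ≤ α) (hcB : t cB = false) (hcR : t cR = true)
    (v : V) (hv : t v = true) (hvR : v ≠ cR) :
    deiCost α (doubleStar t cB cR) t cB ≤ deiCost α (addE (doubleStar t cB cR) cB v) t cB := by
  have hα0 : (0:ℝ) ≤ α := by linarith
  have hBR : cB ≠ cR := ne_of_tt hcB hcR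
  have hRB : cR ≠ cB := Ne.symm hBR
  have hvB : v ≠ cB := ne_of_tt hcB hv |>.symm
  have huv : cB ≠ v := Ne.symm hvB
  have hadj : ¬(doubleStar t cB cR).Adj cB v := by
    rw [ds_adj]; rintro ⟨-, h⟩
    simp [hv, hvR, hvB, hBR, hcB] at h
  have hABR : (doubleStar t cB cR).Adj cB cR := ds_adj_BR hBR
  apply add_not_improving hα0 1
  · apply deiN_step hα0 (deg_addE huv hadj).ge
    have hH : Hs (en (doubleStar t cB cR) t cB) ≤ Hs (en (addE (doubleStar t cB cR) cB v) t cB) :=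
      Hs_mono (en_mono (le_addE _ _ _) cB)
    push_cast
    nlinarith
  · intro w hwv
    by_cases hwu : w = cB
    · subst hwu; rw [SimpleGraph.edist_self]; exact zero_le
    rcases Bool.eq_false_or_eq_true (t w) with hw | hw
    · -- red
      by_cases hwR : w = cR
      · subst hwR; exact hd_adj hABR
      · refine hd2 hABR (ds_adj_cR hwR hw) (Ne.symm hwu) ?_
        rw [addE_adj huv]
        rintro (h | ⟨-, h2⟩ | ⟨h1, -⟩)
        · rw [ds_adj] at h
          simp [hw, hwR, hwu, hBR, hcB] at h
        · exact hwv h2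
        · exact hvB h1.symm
    · -- blue non-center
      exact hd_adj (ds_adj_cB hwu hw)
  · exact gain1 huv (edist_le_two hABR (ds_adj_cR hvR hv))

/-- `cR` does not improve by linking to a blue non-center `v`. -/
lemma ds_add_cR (hα1 : 1 ≤ α) (hcB : t cB = false) (hcR : t cR = true)
    (v : V) (hv : t v = false) (hvB : v ≠ cB) :
    deiCost α (doubleStar t cB cR) t cR ≤ deiCost α (addE (doubleStar t cB cR) cR v) t cR := by
  have hα0 : (0:ℝ) ≤ α := by linarith
  have hBR : cB ≠ cR := ne_of_tt hcB hcR
  have hRB : cR ≠ cB := Ne.symm hBR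
  have hvR : v ≠ cR := ne_of_tt hv hcR
  have huv : cR ≠ v := Ne.symm hvR
  have hadj : ¬(doubleStar t cB cR).Adj cR v := by
    rw [ds_adj]; rintro ⟨-, h⟩
    simp [hv, hvR, hvB, hBR, hRB, hcR] at h
  have hABR : (doubleStar t cB cR).Adj cR cB := (ds_adj_BR hBR).symm
  apply add_not_improving hα0 1
  · apply deiN_step hα0 (deg_addE huv hadj).ge
    have hH : Hs (en (doubleStar t cB cR) t cR) ≤ Hs (en (addE (doubleStar t cB cR) cR v) t cR) :=
      Hs_mono (en_mono (le_addE _ _ _) cR)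
    push_cast
    nlinarith
  · intro w hwv
    by_cases hwu : w = cR
    · subst hwu; rw [SimpleGraph.edist_self]; exact zero_le
    rcases Bool.eq_false_or_eq_true (t w) with hw | hw
    · -- red non-center
      exact hd_adj (ds_adj_cR hwu hw)
    · -- blue
      by_cases hwB : w = cB
      · subst hwB; exact hd_adj hABR
      · refine hd2 hABR (ds_adj_cB hwB hw) (Ne.symm hwu) ?_
        rw [addE_adj huv]
        rintro (h | ⟨-, h2⟩ | ⟨h1, -⟩)
        · rw [ds_adj] at h
          simp [hw, hwB, hwu, hBR, hRB, hcR] at h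
        · exact hwv h2
        · exact hvR h1.symm
  · exact gain1 huv (edist_le_two hABR (ds_adj_cB hvB hv))

/-- a blue leaf `u` does not improve by linking to another blue vertex `v`. -/
lemma ds_add_bb (hα1 : 1 ≤ α) (hcB : t cB = false) (hcR : t cR = true) (u v : V)
    (hu : t u = false) (huB : u ≠ cB) (hv : t v = false) (hvB : v ≠ cB) (huv : u ≠ v) :
    deiCost α (doubleStar t cB cR) t u ≤ deiCost α (addE (doubleStar t cB cR) u v) t u := by
  have hα0 : (0:ℝ) ≤ α := by linarith
  have hBR : cB ≠ cR := ne_of_tt hcB hcR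
  have hRB : cR ≠ cB := Ne.symm hBR
  have huR : u ≠ cR := ne_of_tt hu hcR
  have hvR : v ≠ cR := ne_of_tt hv hcR
  have haucB : (doubleStar t cB cR).Adj u cB := (ds_adj_cB huB hu).symm
  have hadj : ¬(doubleStar t cB cR).Adj u v := fun h =>
    hvB (ds_nbr_blue_leaf hcB hcR hu huB h)
  apply add_not_improving hα0 1
  · apply deiN_step hα0 (deg_addE huv hadj).ge
    have hH : Hs (en (doubleStar t cB cR) t u) ≤ Hs (en (addE (doubleStar t cB cR) u v) t u) :=
      Hs_mono (en_mono (le_addE _ _ _) u)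
    push_cast
    nlinarith
  · intro w hwv
    by_cases hwu : w = u
    · subst hwu; rw [SimpleGraph.edist_self]; exact zero_le
    by_cases hwB : w = cB
    · subst hwB; exact hd_adj haucB
    rcases Bool.eq_false_or_eq_true (t w) with hw | hw
    · -- red w
      by_cases hwR : w = cR
      · subst hwR
        refine hd2 haucB (ds_adj_BR hBR) huR ?_
        rw [addE_adj huv]
        rintro (h | ⟨-, h2⟩ | ⟨h1, -⟩)
        · exact hwB (ds_nbr_blue_leaf hcB hcR hu huB h) -- wrong: this gives cR = cB
        · exact hvR h2.symm
        · exact huv h1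
      · -- red leaf w : distance 3
        refine hd3 haucB (ds_adj_BR hBR) (ds_adj_cR hwR hw) (ne_of_tt hu hw) ?_ ?_
        · rw [addE_adj huv]
          rintro (h | ⟨-, h2⟩ | ⟨h1, -⟩)
          · exact hwB (ds_nbr_blue_leaf hcB hcR hu huB h)
          · exact hwv h2
          · exact huv h1
        · intro z hz hzw
          rw [addE_adj huv] at hz
          rcases hz with h | ⟨-, rfl⟩ | ⟨h1, -⟩
          · have hzB := ds_nbr_blue_leaf hcB hcR hu huB h
            subst hzB
            rw [addE_adj huv] at hzw
            rcases hzw with h' | ⟨h1, -⟩ | ⟨h1, -⟩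
            · rw [ds_adj] at h'
              simp [hw, hwR, hwB, hBR, hcB] at h'
            · exact huB h1.symm
            · exact hvB h1.symm
          · -- z = v
            rw [addE_adj huv] at hzw
            rcases hzw with h' | ⟨h1, -⟩ | ⟨-, h2⟩
            · exact (ne_of_tt hcB hw) (ds_nbr_blue_leaf hcB hcR hv hvB h').symm
            · exact huv h1.symm
            · exact (ne_of_tt hu hw) h2.symm
          · exact huv h1
    · -- blue leaf w : distance 2 via cB
      refine hd2 haucB (ds_adj_cB hwB hw) (Ne.symm hwu) ?_
      rw [addE_adj huv]
      rintro (h | ⟨-, h2⟩ | ⟨h1, -⟩)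
      · exact hwB (ds_nbr_blue_leaf hcB hcR hu huB h)
      · exact hwv h2
      · exact huv h1
  · exact gain1 huv (edist_le_two haucB (ds_adj_cB hvB hv))

/-- a red leaf `u` does not improve by linking to another red vertex `v`. -/
lemma ds_add_rr (hα1 : 1 ≤ α) (hcB : t cB = false) (hcR : t cR = true) (u v : V)
    (hu : t u = true) (huR : u ≠ cR) (hv : t v = true) (hvR : v ≠ cR) (huv : u ≠ v) :
    deiCost α (doubleStar t cB cR) t u ≤ deiCost α (addE (doubleStar t cB cR) u v) t u := by
  have hα0 : (0:ℝ) ≤ α := by linarith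
  have hBR : cB ≠ cR := ne_of_tt hcB hcR
  have hRB : cR ≠ cB := Ne.symm hBR
  have huB : u ≠ cB := (ne_of_tt hcB hu).symm
  have hvB : v ≠ cB := (ne_of_tt hcB hv).symm
  have haucR : (doubleStar t cB cR).Adj u cR := (ds_adj_cR huR hu).symm
  have hadj : ¬(doubleStar t cB cR).Adj u v := fun h =>
    hvR (ds_nbr_red_leaf hcB hcR hu huR h)
  apply add_not_improving hα0 1
  · apply deiN_step hα0 (deg_addE huv hadj).ge
    have hH : Hs (en (doubleStar t cB cR) t u) ≤ Hs (en (addE (doubleStar t cB cR) u v) t u) :=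
      Hs_mono (en_mono (le_addE _ _ _) u)
    push_cast
    nlinarith
  · intro w hwv
    by_cases hwu : w = u
    · subst hwu; rw [SimpleGraph.edist_self]; exact zero_le
    by_cases hwR : w = cR
    · subst hwR; exact hd_adj haucR
    rcases Bool.eq_false_or_eq_true (t w) with hw | hw
    · -- red leaf w : distance 2 via cR
      refine hd2 haucR (ds_adj_cR hwR hw) (Ne.symm hwu) ?_
      rw [addE_adj huv]
      rintro (h | ⟨-, h2⟩ | ⟨h1, -⟩)
      · exact hwR (ds_nbr_red_leaf hcB hcR hu huR h)
      · exact hwv h2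
      · exact huv h1
    · -- blue w
      by_cases hwB : w = cB
      · subst hwB
        refine hd2 haucR (ds_adj_BR hBR).symm huB ?_
        rw [addE_adj huv]
        rintro (h | ⟨-, h2⟩ | ⟨h1, -⟩)
        · exact hBR (ds_nbr_red_leaf hcB hcR hu huR h)
        · exact hvB h2.symm
        · exact huv h1
      · -- blue leaf w : distance 3
        refine hd3 haucR (ds_adj_BR hBR).symm (ds_adj_cB hwB hw) (ne_of_tt hw hu).symm ?_ ?_
        · rw [addE_adj huv]
          rintro (h | ⟨-, h2⟩ | ⟨h1, -⟩)
          · exact hwR (ds_nbr_red_leaf hcB hcR hu huR h)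
          · exact hwv h2
          · exact huv h1
        · intro z hz hzw
          rw [addE_adj huv] at hz
          rcases hz with h | ⟨-, rfl⟩ | ⟨h1, -⟩
          · have hzR := ds_nbr_red_leaf hcB hcR hu huR h
            subst hzR
            rw [addE_adj huv] at hzw
            rcases hzw with h' | ⟨h1, -⟩ | ⟨h1, -⟩
            · rw [ds_adj] at h'
              simp [hw, hwR, hwB, hBR, hRB, hcR] at h'
            · exact huR h1.symm
            · exact hvR h1.symm
          · -- z = v
            rw [addE_adj huv] at hzw
            rcases hzw with h' | ⟨h1, -⟩ | ⟨-, h2⟩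
            · exact (ne_of_tt hw hcR) (ds_nbr_red_leaf hcB hcR hv hvR h')
            · exact huv h1.symm
            · exact (ne_of_tt hw hu) h2
          · exact huv h1
  · exact gain1 huv (edist_le_two haucR (ds_adj_cR hvR hv))

/-- a blue leaf `u` does not improve by linking to a red non-center `v`. -/
lemma ds_add_br (hα1 : 1 ≤ α) (hcB : t cB = false) (hcR : t cR = true) (u v : V)
    (hu : t u = false) (huB : u ≠ cB) (hv : t v = true) (hvR : v ≠ cR) :
    deiCost α (doubleStar t cB cR) t u ≤ deiCost α (addE (doubleStar t cB cR) u v) t u := by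
  have hα0 : (0:ℝ) ≤ α := by linarith
  have hBR : cB ≠ cR := ne_of_tt hcB hcR
  have hRB : cR ≠ cB := Ne.symm hBR
  have huR : u ≠ cR := ne_of_tt hu hcR
  have hvB : v ≠ cB := (ne_of_tt hcB hv).symm
  have huv : u ≠ v := ne_of_tt hu hv
  have haucB : (doubleStar t cB cR).Adj u cB := (ds_adj_cB huB hu).symm
  have hadj : ¬(doubleStar t cB cR).Adj u v := fun h =>
    hvB (ds_nbr_blue_leaf hcB hcR hu huB h)
  apply add_not_improving hα0 2
  · apply deiN_step hα0 (deg_addE huv hadj).ge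
    have he0 : en (doubleStar t cB cR) t u = 0 :=
      en_eq_zero_of (fun w hw => by rw [ds_nbr_blue_leaf hcB hcR hu huB hw, hcB, hu])
    have he1 : en (addE (doubleStar t cB cR) u v) t u = 1 := by
      rw [en_addE_cross huv hadj (by rw [hv, hu]; exact Bool.noConfusion), he0]
    rw [he0, he1]
    have : Hs 1 = 1 := by
      rw [show (1:ℕ) = 0 + 1 from rfl, Hs_succ]
      norm_num [Hs]
    rw [this]
    have : Hs 0 = 0 := by simp [Hs]
    rw [this]
    push_cast
    nlinarith
  · intro w hwv
    by_cases hwu : w = u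
    · subst hwu; rw [SimpleGraph.edist_self]; exact zero_le
    by_cases hwB : w = cB
    · subst hwB; exact hd_adj haucB
    rcases Bool.eq_false_or_eq_true (t w) with hw | hw
    · -- red w
      by_cases hwR : w = cR
      · subst hwR
        refine hd2 haucB (ds_adj_BR hBR) huR ?_
        rw [addE_adj huv]
        rintro (h | ⟨-, h2⟩ | ⟨h1, -⟩)
        · exact hBR (ds_nbr_blue_leaf hcB hcR hu huB h).symm
        · exact hvR h2.symm
        · exact huv h1
      · -- red leaf w ≠ v : distance 3
        refine hd3 haucB (ds_adj_BR hBR) (ds_adj_cR hwR hw) (ne_of_tt hu hw) ?_ ?_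
        · rw [addE_adj huv]
          rintro (h | ⟨-, h2⟩ | ⟨h1, -⟩)
          · exact hwB (ds_nbr_blue_leaf hcB hcR hu huB h)
          · exact hwv h2
          · exact huv h1
        · intro z hz hzw
          rw [addE_adj huv] at hz
          rcases hz with h | ⟨-, rfl⟩ | ⟨h1, -⟩
          · have hzB := ds_nbr_blue_leaf hcB hcR hu huB h
            subst hzB
            rw [addE_adj huv] at hzw
            rcases hzw with h' | ⟨h1, -⟩ | ⟨h1, -⟩
            · rw [ds_adj] at h'
              simp [hw, hwR, hwB, hBR, hcB] at h'
            · exact huB h1.symm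
            · exact hvB h1.symm
          · -- z = v, red leaf
            rw [addE_adj huv] at hzw
            rcases hzw with h' | ⟨h1, -⟩ | ⟨-, h2⟩
            · exact hwR (ds_nbr_red_leaf hcB hcR hv hvR h')
            · exact huv h1.symm
            · exact (ne_of_tt hu hw) h2.symm
          · exact huv h1
    · -- blue w ≠ cB : distance 2 via cB
      refine hd2 haucB (ds_adj_cB hwB hw) (Ne.symm hwu) ?_
      rw [addE_adj huv]
      rintro (h | ⟨-, h2⟩ | ⟨h1, -⟩)
      · exact hwB (ds_nbr_blue_leaf hcB hcR hu huB h)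
      · exact hwv h2
      · exact huv h1
  · exact gain2 huv (edist_le_three haucB (ds_adj_BR hBR) (ds_adj_cR hvR hv))

/-- a red leaf `u` does not improve by linking to a blue non-center `v`. -/
lemma ds_add_rb (hα1 : 1 ≤ α) (hcB : t cB = false) (hcR : t cR = true) (u v : V)
    (hu : t u = true) (huR : u ≠ cR) (hv : t v = false) (hvB : v ≠ cB) :
    deiCost α (doubleStar t cB cR) t u ≤ deiCost α (addE (doubleStar t cB cR) u v) t u := by
  have hα0 : (0:ℝ) ≤ α := by linarith
  have hBR : cB ≠ cR := ne_of_tt hcB hcR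
  have hRB : cR ≠ cB := Ne.symm hBR
  have huB : u ≠ cB := (ne_of_tt hcB hu).symm
  have hvR : v ≠ cR := ne_of_tt hv hcR
  have huv : u ≠ v := (ne_of_tt hv hu).symm
  have haucR : (doubleStar t cB cR).Adj u cR := (ds_adj_cR huR hu).symm
  have hadj : ¬(doubleStar t cB cR).Adj u v := fun h =>
    hvR (ds_nbr_red_leaf hcB hcR hu huR h)
  apply add_not_improving hα0 2
  · apply deiN_step hα0 (deg_addE huv hadj).ge
    have he0 : en (doubleStar t cB cR) t u = 0 :=
      en_eq_zero_of (fun w hw => by rw [ds_nbr_red_leaf hcB hcR hu huR hw, hcR, hu])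
    have he1 : en (addE (doubleStar t cB cR) u v) t u = 1 := by
      rw [en_addE_cross huv hadj (by rw [hv, hu]; exact Bool.noConfusion), he0]
    rw [he0, he1]
    have h1 : Hs 1 = 1 := by
      rw [show (1:ℕ) = 0 + 1 from rfl, Hs_succ]
      norm_num [Hs]
    have h0 : Hs 0 = 0 := by simp [Hs]
    rw [h1, h0]
    push_cast
    nlinarith
  · intro w hwv
    by_cases hwu : w = u
    · subst hwu; rw [SimpleGraph.edist_self]; exact zero_le
    by_cases hwR : w = cR
    · subst hwR; exact hd_adj haucR
    rcases Bool.eq_false_or_eq_true (t w) with hw | hw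
    · -- red w ≠ cR : distance 2 via cR
      refine hd2 haucR (ds_adj_cR hwR hw) (Ne.symm hwu) ?_
      rw [addE_adj huv]
      rintro (h | ⟨-, h2⟩ | ⟨h1, -⟩)
      · exact hwR (ds_nbr_red_leaf hcB hcR hu huR h)
      · exact hwv h2
      · exact huv h1
    · -- blue w
      by_cases hwB : w = cB
      · subst hwB
        refine hd2 haucR (ds_adj_BR hBR).symm huB ?_
        rw [addE_adj huv]
        rintro (h | ⟨-, h2⟩ | ⟨h1, -⟩)
        · exact hBR (ds_nbr_red_leaf hcB hcR hu huR h)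
        · exact hvB h2.symm
        · exact huv h1
      · -- blue leaf w ≠ v : distance 3
        refine hd3 haucR (ds_adj_BR hBR).symm (ds_adj_cB hwB hw) (ne_of_tt hw hu).symm ?_ ?_
        · rw [addE_adj huv]
          rintro (h | ⟨-, h2⟩ | ⟨h1, -⟩)
          · exact hwR (ds_nbr_red_leaf hcB hcR hu huR h)
          · exact hwv h2
          · exact huv h1
        · intro z hz hzw
          rw [addE_adj huv] at hz
          rcases hz with h | ⟨-, rfl⟩ | ⟨h1, -⟩
          · have hzR := ds_nbr_red_leaf hcB hcR hu huR h
            subst hzR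
            rw [addE_adj huv] at hzw
            rcases hzw with h' | ⟨h1, -⟩ | ⟨h1, -⟩
            · rw [ds_adj] at h'
              simp [hw, hwR, hwB, hBR, hRB, hcR] at h'
            · exact huR h1.symm
            · exact hvR h1.symm
          · -- z = v, blue leaf
            rw [addE_adj huv] at hzw
            rcases hzw with h' | ⟨h1, -⟩ | ⟨-, h2⟩
            · exact hwB (ds_nbr_blue_leaf hcB hcR hv hvB h')
            · exact huv h1.symm
            · exact (ne_of_tt hw hu) h2
          · exact huv h1
  · exact gain2 huv (edist_le_three haucR (ds_adj_BR hBR).symm (ds_adj_cB hvB hv))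


/-! ### switched double star masters -/

lemma sds_adj_cB {b : V} (hcB : t cB = false) (h2 : t b = true) :
    (switchedDoubleStar t cB cR).Adj cB b :=
  sds_adj.mpr ⟨ne_of_tt hcB h2, Or.inl (Or.inl ⟨rfl, h2⟩)⟩

lemma sds_adj_cR {b : V} (hcR : t cR = true) (h2 : t b = false) :
    (switchedDoubleStar t cB cR).Adj cR b :=
  sds_adj.mpr ⟨(ne_of_tt h2 hcR).symm, Or.inl (Or.inr ⟨rfl, h2⟩)⟩

/-- `cB` does not improve by linking to a blue non-center `v`. -/
lemma sds_add_cB (hα1 : 1 ≤ α) (hcB : t cB = false) (hcR : t cR = true)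
    (v : V) (hv : t v = false) (hvB : v ≠ cB) :
    deiCost α (switchedDoubleStar t cB cR) t cB ≤
      deiCost α (addE (switchedDoubleStar t cB cR) cB v) t cB := by
  have hα0 : (0:ℝ) ≤ α := by linarith
  have hBR : cB ≠ cR := ne_of_tt hcB hcR
  have hRB : cR ≠ cB := Ne.symm hBR
  have hvR : v ≠ cR := ne_of_tt hv hcR
  have huv : cB ≠ v := Ne.symm hvB
  have hadj : ¬(switchedDoubleStar t cB cR).Adj cB v := by
    rw [sds_adj]; rintro ⟨-, h⟩
    simp [hv, hvB, hvR, hBR, hRB, hcB] at h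
  have hABR : (switchedDoubleStar t cB cR).Adj cB cR := sds_adj_cB hcB hcR
  apply add_not_improving hα0 1
  · apply deiN_step hα0 (deg_addE huv hadj).ge
    have hH : Hs (en (switchedDoubleStar t cB cR) t cB) ≤
        Hs (en (addE (switchedDoubleStar t cB cR) cB v) t cB) :=
      Hs_mono (en_mono (le_addE _ _ _) cB)
    push_cast
    nlinarith
  · intro w hwv
    by_cases hwu : w = cB
    · subst hwu; rw [SimpleGraph.edist_self]; exact zero_le
    rcases Bool.eq_false_or_eq_true (t w) with hw | hw
    · exact hd_adj (sds_adj_cB hcB hw)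
    · -- blue w ≠ cB : distance 2 via cR
      have hwR : w ≠ cR := ne_of_tt hw hcR
      refine hd2 hABR (sds_adj_cR hcR hw) (Ne.symm hwu) ?_
      rw [addE_adj huv]
      rintro (h | ⟨-, h2⟩ | ⟨h1, -⟩)
      · rw [sds_adj] at h
        simp [hw, hwu, hwR, hBR, hRB, hcB] at h
      · exact hwv h2
      · exact hvB h1.symm
  · exact gain1 huv (edist_le_two hABR (sds_adj_cR hcR hv))

/-- `cR` does not improve by linking to a red non-center `v`. -/
lemma sds_add_cR (hα1 : 1 ≤ α) (hcB : t cB = false) (hcR : t cR = true)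
    (v : V) (hv : t v = true) (hvR : v ≠ cR) :
    deiCost α (switchedDoubleStar t cB cR) t cR ≤
      deiCost α (addE (switchedDoubleStar t cB cR) cR v) t cR := by
  have hα0 : (0:ℝ) ≤ α := by linarith
  have hBR : cB ≠ cR := ne_of_tt hcB hcR
  have hRB : cR ≠ cB := Ne.symm hBR
  have hvB : v ≠ cB := (ne_of_tt hcB hv).symm
  have huv : cR ≠ v := Ne.symm hvR
  have hadj : ¬(switchedDoubleStar t cB cR).Adj cR v := by
    rw [sds_adj]; rintro ⟨-, h⟩
    simp [hv, hvB, hvR, hBR, hRB, hcR] at h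
  have hARB : (switchedDoubleStar t cB cR).Adj cR cB := (sds_adj_cB hcB hcR).symm
  apply add_not_improving hα0 1
  · apply deiN_step hα0 (deg_addE huv hadj).ge
    have hH : Hs (en (switchedDoubleStar t cB cR) t cR) ≤
        Hs (en (addE (switchedDoubleStar t cB cR) cR v) t cR) :=
      Hs_mono (en_mono (le_addE _ _ _) cR)
    push_cast
    nlinarith
  · intro w hwv
    by_cases hwu : w = cR
    · subst hwu; rw [SimpleGraph.edist_self]; exact zero_le
    rcases Bool.eq_false_or_eq_true (t w) with hw | hw
    · -- red w ≠ cR : distance 2 via cB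
      have hwB : w ≠ cB := (ne_of_tt hcB hw).symm
      refine hd2 hARB (sds_adj_cB hcB hw) (Ne.symm hwu) ?_
      rw [addE_adj huv]
      rintro (h | ⟨-, h2⟩ | ⟨h1, -⟩)
      · rw [sds_adj] at h
        simp [hw, hwu, hwB, hBR, hRB, hcR] at h
      · exact hwv h2
      · exact hvR h1.symm
    · exact hd_adj (sds_adj_cR hcR hw)
  · exact gain1 huv (edist_le_two hARB (sds_adj_cB hcB hv))

/-- a red leaf `u` does not improve by linking to another red vertex `v`. -/
lemma sds_add_rr (hα1 : 1 ≤ α) (hcB : t cB = false) (hcR : t cR = true) (u v : V)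
    (hu : t u = true) (huR : u ≠ cR) (hv : t v = true) (hvR : v ≠ cR) (huv : u ≠ v) :
    deiCost α (switchedDoubleStar t cB cR) t u ≤
      deiCost α (addE (switchedDoubleStar t cB cR) u v) t u := by
  have hα0 : (0:ℝ) ≤ α := by linarith
  have hBR : cB ≠ cR := ne_of_tt hcB hcR
  have hRB : cR ≠ cB := Ne.symm hBR
  have huB : u ≠ cB := (ne_of_tt hcB hu).symm
  have hvB : v ≠ cB := (ne_of_tt hcB hv).symm
  have haucB : (switchedDoubleStar t cB cR).Adj u cB := (sds_adj_cB hcB hu).symm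
  have hadj : ¬(switchedDoubleStar t cB cR).Adj u v := fun h =>
    hvB (sds_nbr_red_leaf hcB hcR hu huR h)
  apply add_not_improving hα0 1
  · apply deiN_step hα0 (deg_addE huv hadj).ge
    have hH : Hs (en (switchedDoubleStar t cB cR) t u) ≤
        Hs (en (addE (switchedDoubleStar t cB cR) u v) t u) :=
      Hs_mono (en_mono (le_addE _ _ _) u)
    push_cast
    nlinarith
  · intro w hwv
    by_cases hwu : w = u
    · subst hwu; rw [SimpleGraph.edist_self]; exact zero_le
    by_cases hwB : w = cB
    · subst hwB; exact hd_adj haucB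
    rcases Bool.eq_false_or_eq_true (t w) with hw | hw
    · -- red w : distance 2 via cB
      refine hd2 haucB (sds_adj_cB hcB hw) (Ne.symm hwu) ?_
      rw [addE_adj huv]
      rintro (h | ⟨-, h2⟩ | ⟨h1, -⟩)
      · exact hwB (sds_nbr_red_leaf hcB hcR hu huR h)
      · exact hwv h2
      · exact huv h1
    · -- blue leaf w ≠ cB : distance 3 via cB, cR
      have hwR : w ≠ cR := ne_of_tt hw hcR
      refine hd3 haucB (sds_adj_cB hcB hcR) (sds_adj_cR hcR hw) (ne_of_tt hw hu).symm ?_ ?_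
      · rw [addE_adj huv]
        rintro (h | ⟨-, h2⟩ | ⟨h1, -⟩)
        · exact hwB (sds_nbr_red_leaf hcB hcR hu huR h)
        · exact hwv h2
        · exact huv h1
      · intro z hz hzw
        rw [addE_adj huv] at hz
        rcases hz with h | ⟨-, rfl⟩ | ⟨h1, -⟩
        · have hzB := sds_nbr_red_leaf hcB hcR hu huR h
          subst hzB
          rw [addE_adj huv] at hzw
          rcases hzw with h' | ⟨h1, -⟩ | ⟨h1, -⟩
          · rw [sds_adj] at h'
            simp [hw, hwB, hwR, hBR, hRB, hcB] at h'
          · exact huB h1.symm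
          · exact hvB h1.symm
        · -- z = v, red leaf
          rw [addE_adj huv] at hzw
          rcases hzw with h' | ⟨h1, -⟩ | ⟨-, h2⟩
          · exact hwB (sds_nbr_red_leaf hcB hcR hv hvR h')
          · exact huv h1.symm
          · exact (ne_of_tt hw hu) h2
        · exact huv h1
  · exact gain1 huv (edist_le_two haucB (sds_adj_cB hcB hv))

/-- a blue leaf `u` does not improve by linking to another blue vertex `v`. -/
lemma sds_add_bb (hα1 : 1 ≤ α) (hcB : t cB = false) (hcR : t cR = true) (u v : V)
    (hu : t u = false) (huB : u ≠ cB) (hv : t v = false) (hvB : v ≠ cB) (huv : u ≠ v) :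
    deiCost α (switchedDoubleStar t cB cR) t u ≤
      deiCost α (addE (switchedDoubleStar t cB cR) u v) t u := by
  have hα0 : (0:ℝ) ≤ α := by linarith
  have hBR : cB ≠ cR := ne_of_tt hcB hcR
  have hRB : cR ≠ cB := Ne.symm hBR
  have huR : u ≠ cR := ne_of_tt hu hcR
  have hvR : v ≠ cR := ne_of_tt hv hcR
  have haucR : (switchedDoubleStar t cB cR).Adj u cR := (sds_adj_cR hcR hu).symm
  have hadj : ¬(switchedDoubleStar t cB cR).Adj u v := fun h =>
    hvR (sds_nbr_blue_leaf hcB hcR hu huB h)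
  apply add_not_improving hα0 1
  · apply deiN_step hα0 (deg_addE huv hadj).ge
    have hH : Hs (en (switchedDoubleStar t cB cR) t u) ≤
        Hs (en (addE (switchedDoubleStar t cB cR) u v) t u) :=
      Hs_mono (en_mono (le_addE _ _ _) u)
    push_cast
    nlinarith
  · intro w hwv
    by_cases hwu : w = u
    · subst hwu; rw [SimpleGraph.edist_self]; exact zero_le
    by_cases hwR : w = cR
    · subst hwR; exact hd_adj haucR
    rcases Bool.eq_false_or_eq_true (t w) with hw | hw
    · -- red leaf w ≠ cR : distance 3 via cR, cB
      have hwB : w ≠ cB := (ne_of_tt hcB hw).symm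
      refine hd3 haucR (sds_adj_cB hcB hcR).symm (sds_adj_cB hcB hw) (ne_of_tt hu hw) ?_ ?_
      · rw [addE_adj huv]
        rintro (h | ⟨-, h2⟩ | ⟨h1, -⟩)
        · exact hwR (sds_nbr_blue_leaf hcB hcR hu huB h)
        · exact hwv h2
        · exact huv h1
      · intro z hz hzw
        rw [addE_adj huv] at hz
        rcases hz with h | ⟨-, rfl⟩ | ⟨h1, -⟩
        · have hzR := sds_nbr_blue_leaf hcB hcR hu huB h
          subst hzR
          rw [addE_adj huv] at hzw
          rcases hzw with h' | ⟨h1, -⟩ | ⟨h1, -⟩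
          · rw [sds_adj] at h'
            simp [hw, hwB, hwR, hBR, hRB, hcR] at h'
          · exact huR h1.symm
          · exact hvR h1.symm
        · -- z = v, blue leaf
          rw [addE_adj huv] at hzw
          rcases hzw with h' | ⟨h1, -⟩ | ⟨-, h2⟩
          · exact hwR (sds_nbr_blue_leaf hcB hcR hv hvB h')
          · exact huv h1.symm
          · exact (ne_of_tt hu hw) h2.symm
        · exact huv h1
    · -- blue w : distance 2 via cR
      refine hd2 haucR (sds_adj_cR hcR hw) (Ne.symm hwu) ?_
      rw [addE_adj huv]
      rintro (h | ⟨-, h2⟩ | ⟨h1, -⟩)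
      · exact hwR (sds_nbr_blue_leaf hcB hcR hu huB h)
      · exact hwv h2
      · exact huv h1
  · exact gain1 huv (edist_le_two haucR (sds_adj_cR hcR hv))

/-- a red leaf `u` does not improve by linking to a blue non-center `v` (needs `α ≥ 4/3`). -/
lemma sds_add_rb (hα43 : 4/3 ≤ α) (hcB : t cB = false) (hcR : t cR = true) (u v : V)
    (hu : t u = true) (huR : u ≠ cR) (hv : t v = false) (hvB : v ≠ cB) :
    deiCost α (switchedDoubleStar t cB cR) t u ≤
      deiCost α (addE (switchedDoubleStar t cB cR) u v) t u := by
  have hα0 : (0:ℝ) ≤ α := by linarith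
  have hBR : cB ≠ cR := ne_of_tt hcB hcR
  have hRB : cR ≠ cB := Ne.symm hBR
  have huB : u ≠ cB := (ne_of_tt hcB hu).symm
  have hvR : v ≠ cR := ne_of_tt hv hcR
  have huv : u ≠ v := (ne_of_tt hv hu).symm
  have haucB : (switchedDoubleStar t cB cR).Adj u cB := (sds_adj_cB hcB hu).symm
  have hadj : ¬(switchedDoubleStar t cB cR).Adj u v := fun h =>
    hvB (sds_nbr_red_leaf hcB hcR hu huR h)
  apply add_not_improving hα0 2
  · apply deiN_step hα0 (deg_addE huv hadj).ge
    have he1 : en (switchedDoubleStar t cB cR) t u = 1 := by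
      refine en_eq_one_of (by rw [hcB, hu]; exact Bool.noConfusion) (fun w => ?_)
      constructor
      · exact sds_nbr_red_leaf hcB hcR hu huR
      · rintro rfl; exact haucB
    have he2 : en (addE (switchedDoubleStar t cB cR) u v) t u = 2 := by
      rw [en_addE_cross huv hadj (by rw [hv, hu]; exact Bool.noConfusion), he1]
    rw [he1, he2]
    have h2 : Hs 2 = Hs 1 + 1/2 := by
      rw [show (2:ℕ) = 1 + 1 from rfl, Hs_succ]
      norm_num
    rw [h2]
    push_cast
    nlinarith
  · intro w hwv
    by_cases hwu : w = u
    · subst hwu; rw [SimpleGraph.edist_self]; exact zero_le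
    by_cases hwB : w = cB
    · subst hwB; exact hd_adj haucB
    rcases Bool.eq_false_or_eq_true (t w) with hw | hw
    · -- red w : distance 2 via cB
      refine hd2 haucB (sds_adj_cB hcB hw) (Ne.symm hwu) ?_
      rw [addE_adj huv]
      rintro (h | ⟨-, h2⟩ | ⟨h1, -⟩)
      · exact hwB (sds_nbr_red_leaf hcB hcR hu huR h)
      · exact hwv h2
      · exact huv h1
    · -- blue leaf w ≠ v : distance 3 via cB, cR
      have hwR : w ≠ cR := ne_of_tt hw hcR
      refine hd3 haucB (sds_adj_cB hcB hcR) (sds_adj_cR hcR hw) (ne_of_tt hw hu).symm ?_ ?_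
      · rw [addE_adj huv]
        rintro (h | ⟨-, h2⟩ | ⟨h1, -⟩)
        · exact hwB (sds_nbr_red_leaf hcB hcR hu huR h)
        · exact hwv h2
        · exact huv h1
      · intro z hz hzw
        rw [addE_adj huv] at hz
        rcases hz with h | ⟨-, rfl⟩ | ⟨h1, -⟩
        · have hzB := sds_nbr_red_leaf hcB hcR hu huR h
          subst hzB
          rw [addE_adj huv] at hzw
          rcases hzw with h' | ⟨h1, -⟩ | ⟨h1, -⟩
          · rw [sds_adj] at h'
            simp [hw, hwB, hwR, hBR, hRB, hcB] at h'
          · exact huB h1.symm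
          · exact hvB h1.symm
        · -- z = v, blue leaf
          rw [addE_adj huv] at hzw
          rcases hzw with h' | ⟨h1, -⟩ | ⟨-, h2⟩
          · exact hwR (sds_nbr_blue_leaf hcB hcR hv hvB h')
          · exact huv h1.symm
          · exact (ne_of_tt hw hu) h2
        · exact huv h1
  · exact gain2 huv (edist_le_three haucB (sds_adj_cB hcB hcR) (sds_adj_cR hcR hv))

/-- a blue leaf `u` does not improve by linking to a red non-center `v` (needs `α ≥ 4/3`). -/
lemma sds_add_br (hα43 : 4/3 ≤ α) (hcB : t cB = false) (hcR : t cR = true) (u v : V)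
    (hu : t u = false) (huB : u ≠ cB) (hv : t v = true) (hvR : v ≠ cR) :
    deiCost α (switchedDoubleStar t cB cR) t u ≤
      deiCost α (addE (switchedDoubleStar t cB cR) u v) t u := by
  have hα0 : (0:ℝ) ≤ α := by linarith
  have hBR : cB ≠ cR := ne_of_tt hcB hcR
  have hRB : cR ≠ cB := Ne.symm hBR
  have huR : u ≠ cR := ne_of_tt hu hcR
  have hvB : v ≠ cB := (ne_of_tt hcB hv).symm
  have huv : u ≠ v := ne_of_tt hu hv
  have haucR : (switchedDoubleStar t cB cR).Adj u cR := (sds_adj_cR hcR hu).symm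
  have hadj : ¬(switchedDoubleStar t cB cR).Adj u v := fun h =>
    hvR (sds_nbr_blue_leaf hcB hcR hu huB h)
  apply add_not_improving hα0 2
  · apply deiN_step hα0 (deg_addE huv hadj).ge
    have he1 : en (switchedDoubleStar t cB cR) t u = 1 := by
      refine en_eq_one_of (by rw [hcR, hu]; exact Bool.noConfusion) (fun w => ?_)
      constructor
      · exact sds_nbr_blue_leaf hcB hcR hu huB
      · rintro rfl; exact haucR
    have he2 : en (addE (switchedDoubleStar t cB cR) u v) t u = 2 := by
      rw [en_addE_cross huv hadj (by rw [hv, hu]; exact Bool.noConfusion), he1]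
    rw [he1, he2]
    have h2 : Hs 2 = Hs 1 + 1/2 := by
      rw [show (2:ℕ) = 1 + 1 from rfl, Hs_succ]
      norm_num
    rw [h2]
    push_cast
    nlinarith
  · intro w hwv
    by_cases hwu : w = u
    · subst hwu; rw [SimpleGraph.edist_self]; exact zero_le
    by_cases hwR : w = cR
    · subst hwR; exact hd_adj haucR
    rcases Bool.eq_false_or_eq_true (t w) with hw | hw
    · -- red leaf w ≠ v : distance 3 via cR, cB
      have hwB : w ≠ cB := (ne_of_tt hcB hw).symm
      refine hd3 haucR (sds_adj_cB hcB hcR).symm (sds_adj_cB hcB hw) (ne_of_tt hu hw) ?_ ?_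
      · rw [addE_adj huv]
        rintro (h | ⟨-, h2⟩ | ⟨h1, -⟩)
        · exact hwR (sds_nbr_blue_leaf hcB hcR hu huB h)
        · exact hwv h2
        · exact huv h1
      · intro z hz hzw
        rw [addE_adj huv] at hz
        rcases hz with h | ⟨-, rfl⟩ | ⟨h1, -⟩
        · have hzR := sds_nbr_blue_leaf hcB hcR hu huB h
          subst hzR
          rw [addE_adj huv] at hzw
          rcases hzw with h' | ⟨h1, -⟩ | ⟨h1, -⟩
          · rw [sds_adj] at h'
            simp [hw, hwB, hwR, hBR, hRB, hcR] at h'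
          · exact huR h1.symm
          · exact hvR h1.symm
        · -- z = v, red leaf
          rw [addE_adj huv] at hzw
          rcases hzw with h' | ⟨h1, -⟩ | ⟨-, h2⟩
          · exact hwB (sds_nbr_red_leaf hcB hcR hv hvR h')
          · exact huv h1.symm
          · exact (ne_of_tt hu hw) h2.symm
        · exact huv h1
    · -- blue w : distance 2 via cR
      refine hd2 haucR (sds_adj_cR hcR hw) (Ne.symm hwu) ?_
      rw [addE_adj huv]
      rintro (h | ⟨-, h2⟩ | ⟨h1, -⟩)
      · exact hwR (sds_nbr_blue_leaf hcB hcR hu huB h)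
      · exact hwv h2
      · exact huv h1
  · exact gain2 huv (edist_le_three haucR (sds_adj_cB hcB hcR).symm (sds_adj_cB hcB hv))

end masters
end DEIAux

/-- DEI game: for `α ≥ 1` the star and the double star are pairwise stable;
for `α ≥ 4/3` the double star with switched centers is pairwise stable. -/
theorem dei_stars_stable {V : Type*} [Fintype V] (α : ℝ) (t : V → Bool)
    (hα0 : 0 < α) (c cB cR : V) (hcB : t cB = false) (hcR : t cR = true) :
    (1 ≤ α →
      PairwiseStable (fun G' => deiCost α G' t) (starG c) ∧
      PairwiseStable (fun G' => deiCost α G' t) (doubleStar t cB cR)) ∧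
    (4 / 3 ≤ α →
      PairwiseStable (fun G' => deiCost α G' t) (switchedDoubleStar t cB cR)) := by
  have hBR : cB ≠ cR := DEIAux.ne_of_tt hcB hcR
  constructor
  · intro hα1
    constructor
    · -- star
      constructor
      · intro u v huv
        exact DEIAux.le_cost_of_not_reachable α t (DEIAux.star_not_reach huv) _
      · intro u v hne hadj
        have h : ¬(u = c ∨ v = c) := fun h' => hadj (DEIAux.star_adj.mpr ⟨hne, h'⟩)
        exact Or.inl (DEIAux.star_add hα1 c u v (fun e => h (Or.inl e)) (fun e => h (Or.inr e)) hne)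
    · -- double star
      constructor
      · intro u v huv
        exact DEIAux.le_cost_of_not_reachable α t (DEIAux.ds_not_reach hcB hcR huv) _
      · intro u v hne hadj
        by_cases huB : u = cB
        · subst huB
          have hv1 : t v = true := by
            rcases Bool.eq_false_or_eq_true (t v) with h | h
            · exact h
            · exact absurd (DEIAux.ds_adj_cB (Ne.symm hne) h) hadj
          have hv2 : v ≠ cR := fun h' => hadj (by rw [h']; exact DEIAux.ds_adj_BR hBR)
          exact Or.inl (DEIAux.ds_add_cB hα1 hcB hcR v hv1 hv2)
        by_cases hvB : v = cB
        · right
          rw [hvB] at hadj hne ⊢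
          rw [DEIAux.addE_comm]
          have hadj' : ¬(doubleStar t cB cR).Adj cB u := fun h => hadj h.symm
          have hu1 : t u = true := by
            rcases Bool.eq_false_or_eq_true (t u) with h | h
            · exact h
            · exact absurd (DEIAux.ds_adj_cB hne h) hadj'
          have hu2 : u ≠ cR := fun h' => hadj' (by rw [h']; exact DEIAux.ds_adj_BR hBR)
          exact DEIAux.ds_add_cB hα1 hcB hcR u hu1 hu2
        by_cases huR : u = cR
        · subst huR
          have hv1 : t v = false := by
            rcases Bool.eq_false_or_eq_true (t v) with h | h
            · exact absurd (DEIAux.ds_adj_cR (Ne.symm hne) h) hadj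
            · exact h
          exact Or.inl (DEIAux.ds_add_cR hα1 hcB hcR v hv1 hvB)
        by_cases hvR : v = cR
        · right
          rw [hvR] at hadj hne ⊢
          rw [DEIAux.addE_comm]
          have hadj' : ¬(doubleStar t cB cR).Adj cR u := fun h => hadj h.symm
          have hu1 : t u = false := by
            rcases Bool.eq_false_or_eq_true (t u) with h | h
            · exact absurd (DEIAux.ds_adj_cR hne h) hadj'
            · exact h
          exact DEIAux.ds_add_cR hα1 hcB hcR u hu1 huB
        · -- both leaves
          rcases Bool.eq_false_or_eq_true (t u) with hu | hu <;>
            rcases Bool.eq_false_or_eq_true (t v) with hv | hv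
          · exact Or.inl (DEIAux.ds_add_rr hα1 hcB hcR u v hu huR hv hvR hne)
          · exact Or.inl (DEIAux.ds_add_rb hα1 hcB hcR u v hu huR hv hvB)
          · exact Or.inl (DEIAux.ds_add_br hα1 hcB hcR u v hu huB hv hvR)
          · exact Or.inl (DEIAux.ds_add_bb hα1 hcB hcR u v hu huB hv hvB hne)
  · intro hα43
    have hα1 : 1 ≤ α := by linarith
    constructor
    · intro u v huv
      exact DEIAux.le_cost_of_not_reachable α t (DEIAux.sds_not_reach hcB hcR huv) _
    · intro u v hne hadj
      by_cases huB : u = cB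
      · subst huB
        have hv1 : t v = false := by
          rcases Bool.eq_false_or_eq_true (t v) with h | h
          · exact absurd (DEIAux.sds_adj_cB hcB h) hadj
          · exact h
        exact Or.inl (DEIAux.sds_add_cB hα1 hcB hcR v hv1 (Ne.symm hne))
      by_cases hvB : v = cB
      · right
        rw [hvB] at hadj hne ⊢
        rw [DEIAux.addE_comm]
        have hadj' : ¬(switchedDoubleStar t cB cR).Adj cB u := fun h => hadj h.symm
        have hu1 : t u = false := by
          rcases Bool.eq_false_or_eq_true (t u) with h | h
          · exact absurd (DEIAux.sds_adj_cB hcB h) hadj'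
          · exact h
        exact DEIAux.sds_add_cB hα1 hcB hcR u hu1 huB
      by_cases huR : u = cR
      · subst huR
        have hv1 : t v = true := by
          rcases Bool.eq_false_or_eq_true (t v) with h | h
          · exact h
          · exact absurd (DEIAux.sds_adj_cR hcR h) hadj
        exact Or.inl (DEIAux.sds_add_cR hα1 hcB hcR v hv1 (Ne.symm hne))
      by_cases hvR : v = cR
      · right
        rw [hvR] at hadj hne ⊢
        rw [DEIAux.addE_comm]
        have hadj' : ¬(switchedDoubleStar t cB cR).Adj cR u := fun h => hadj h.symm
        have hu1 : t u = true := by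
          rcases Bool.eq_false_or_eq_true (t u) with h | h
          · exact h
          · exact absurd (DEIAux.sds_adj_cR hcR h) hadj'
        exact DEIAux.sds_add_cR hα1 hcB hcR u hu1 huR
      · rcases Bool.eq_false_or_eq_true (t u) with hu | hu <;>
          rcases Bool.eq_false_or_eq_true (t v) with hv | hv
        · exact Or.inl (DEIAux.sds_add_rr hα1 hcB hcR u v hu huR hv hvR hne)
        · exact Or.inl (DEIAux.sds_add_rb hα43 hcB hcR u v hu huR hv hvB)
        · exact Or.inl (DEIAux.sds_add_br hα43 hcB hcR u v hu huB hv hvR)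
        · exact Or.inl (DEIAux.sds_add_bb hα1 hcB hcR u v hu huB hv hvB hne)
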